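/- Let F be a field of odd characteristic p and C ∈ M_n(F) a companion matrix. Then C is the sum of a p-potent matrix and a nilpotent matrix if and only if the trace of C is an integer multiple of the identity of F. -/

import Mathlib

/-- The companion matrix of the polynomial `X^n + c_{n-1} X^{n-1} + ⋯ + c_0`. -/
def companionMatrix {F : Type*} [Field F] {n : ℕ} (c : Fin n → F) :
    Matrix (Fin n) (Fin n) F :=
  Matrix.of fun i j =>
    if (j : ℕ) = n - 1 then -c i else if (i : ℕ) = (j : ℕ) + 1 then 1 else 0

open Polynomial Matrix

private lemma my_trace_pow_char {K : Type*} [Field K] (p : ℕ) [Fact p.Prime] [CharP K p] {n : ℕ}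
    (M : Matrix (Fin n) (Fin n) K) : (M ^ p).trace = M.trace ^ p := by
  rcases Nat.eq_zero_or_pos n with hn | hn
  · subst hn
    simp [Matrix.trace, zero_pow (Fact.out : p.Prime).ne_zero]
  · haveI : Nonempty (Fin n) := ⟨⟨0, hn⟩⟩
    have key : (charmatrix M) ^ p = (expand K p : K[X] →+* K[X]).mapMatrix (charmatrix (M ^ p)) := by
      apply matPolyEquiv.injective
      rw [map_pow, matPolyEquiv_charmatrix, matPolyEquiv_eq_X_pow_sub_C p M,
        sub_pow_char_of_commute _ (Polynomial.commute_X (Polynomial.C M)), ← Polynomial.C_pow]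
    have hdet := congrArg Matrix.det key
    rw [Matrix.det_pow, ← RingHom.map_det] at hdet
    have hco := congrArg (fun q => Polynomial.coeff q ((n - 1) * p)) hdet
    simp only [RingHom.coe_coe] at hco
    rw [← Polynomial.map_frobenius_expand, Polynomial.coeff_map, Polynomial.coeff_expand (Fact.out : p.Prime).pos,
      Polynomial.coeff_expand (Fact.out : p.Prime).pos, if_pos (dvd_mul_left p (n-1)),
      if_pos (dvd_mul_left p (n-1)), Nat.mul_div_cancel _ (Fact.out : p.Prime).pos,
      frobenius_def] at hco
    rw [Matrix.trace_eq_neg_charpoly_coeff, Matrix.trace_eq_neg_charpoly_coeff,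
      Fintype.card_fin, Matrix.charpoly, Matrix.charpoly, ← hco, neg_pow, neg_one_pow_char K p,
      neg_one_mul]

private lemma my_eq_intCast_of_pow {F : Type*} [Field F] (p : ℕ) [Fact p.Prime] [CharP F p]
    (x : F) (h : x ^ p = x) : ∃ m : ℤ, x = (m : F) := by
  classical
  have hq : Fintype.card (ZMod p) = p := ZMod.card p
  have hone : 1 < p := (Fact.out : p.Prime).one_lt
  have hroots := FiniteField.roots_X_pow_card_sub_X (ZMod p)
  rw [hq] at hroots
  have hmonic : (X ^ p - X : (ZMod p)[X]).Monic := by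
    apply Polynomial.monic_X_pow_sub
    simp [hone]
  have hdeg : (X ^ p - X : (ZMod p)[X]).natDegree = p :=
    FiniteField.X_pow_card_sub_X_natDegree_eq (ZMod p) hone
  have hcard : Multiset.card (X ^ p - X : (ZMod p)[X]).roots
      = (X ^ p - X : (ZMod p)[X]).natDegree := by
    rw [hroots, hdeg]; simp [hq]
  have hprod := Polynomial.prod_multiset_X_sub_C_of_monic_of_roots_card_eq hmonic hcard
  rw [hroots] at hprod
  have hprod' : (∏ a : ZMod p, (X - C a) : (ZMod p)[X]) = X ^ p - X := hprod
  set φ : ZMod p →+* F := ZMod.castHom (dvd_refl p) F with hφ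
  have key := congrArg (fun q : (ZMod p)[X] => Polynomial.eval x (q.map φ)) hprod'
  simp only [Polynomial.map_prod, Polynomial.map_sub, Polynomial.map_pow, Polynomial.map_X,
    Polynomial.map_C, Polynomial.eval_prod, Polynomial.eval_sub, Polynomial.eval_pow,
    Polynomial.eval_X, Polynomial.eval_C] at key
  rw [h, sub_self] at key
  obtain ⟨a, -, ha⟩ := Finset.prod_eq_zero_iff.mp key
  have hx : x = φ a := by rwa [sub_eq_zero] at ha
  refine ⟨(a.val : ℤ), ?_⟩
  rw [hx]
  have h2 : ((a.val : ℤ) : F) = ((a.val : ℕ) : F) := by push_cast; ring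
  rw [h2, ← map_natCast φ a.val, ZMod.natCast_val, ZMod.cast_id]

private lemma my_vecMulVec_mul {K : Type*} [CommRing K] {n : ℕ} (v w x y : Fin n → K) :
    vecMulVec v w * vecMulVec x y = (w ⬝ᵥ x) • vecMulVec v y := by
  ext i j
  simp only [Matrix.mul_apply, Matrix.vecMulVec_apply, Matrix.smul_apply, smul_eq_mul,
    dotProduct, Finset.sum_mul]
  apply Finset.sum_congr rfl
  intro l _
  ring

private lemma my_ite_dot {K : Type*} [CommRing K] {n : ℕ} (a : Fin n) (b : K)
    (w : Fin n → K) : (fun j => if j = a then b else 0) ⬝ᵥ w = b * w a := by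
  simp [dotProduct, ite_mul, zero_mul]

private lemma my_dot_ite {K : Type*} [CommRing K] {n : ℕ} (a : Fin n) (b : K)
    (w : Fin n → K) : w ⬝ᵥ (fun j => if j = a then b else 0) = w a * b := by
  simp [dotProduct, mul_ite, mul_zero]

private lemma my_nilpotent_of_lower {K : Type*} [Field K] {n : ℕ} (N : Matrix (Fin n) (Fin n) K)
    (h : ∀ i j : Fin n, (i : ℕ) ≤ (j : ℕ) → N i j = 0) : IsNilpotent N := by
  refine ⟨n, ?_⟩
  have key : ∀ k : ℕ, ∀ i j : Fin n, (i : ℕ) < (j : ℕ) + k → (N ^ k) i j = 0 := by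
    intro k
    induction k with
    | zero =>
      intro i j hij
      rw [pow_zero]
      exact Matrix.one_apply_ne (by intro e; subst e; omega)
    | succ k ih =>
      intro i j hij
      rw [pow_succ', Matrix.mul_apply]
      apply Finset.sum_eq_zero
      intro l _
      rcases le_or_gt (i : ℕ) (l : ℕ) with hl | hl
      · rw [h i l hl, zero_mul]
      · rw [ih l j (by omega), mul_zero]
  ext i j
  rw [Matrix.zero_apply]
  exact key n i j (by omega)

private lemma my_pow_odd {M : Type*} [Monoid M] (x : M) (h3 : x ^ 3 = x) (k : ℕ) :
    x ^ (2 * k + 1) = x := by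
  induction k with
  | zero => simp
  | succ k ih =>
    have h : 2 * (k + 1) + 1 = (2 * k + 1) + 2 := by ring
    rw [h, pow_add, ih, ← pow_succ', h3]

private lemma my_companion_trace {F : Type*} [Field F] {n : ℕ} (hn : 0 < n) (c : Fin n → F) :
    (companionMatrix c).trace = -c ⟨n - 1, by omega⟩ := by
  classical
  rw [Matrix.trace]
  rw [Finset.sum_eq_single (⟨n - 1, by omega⟩ : Fin n)]
  · simp [companionMatrix, Matrix.diag]
  · intro i _ hi
    have hi' : (i : ℕ) ≠ n - 1 := fun e => hi (Fin.ext e)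
    simp [companionMatrix, Matrix.diag, hi']
  · simp

theorem stmt_16 {F : Type*} [Field F] (p : ℕ) [Fact p.Prime] (hp : Odd p)
    [CharP F p] (n : ℕ) (c : Fin n → F)
    (C : Matrix (Fin n) (Fin n) F) (hC : C = companionMatrix c) :
    (∃ E N : Matrix (Fin n) (Fin n) F,
        E ^ p = E ∧ IsNilpotent N ∧ C = E + N) ↔
      ∃ m : ℤ, C.trace = (m : F) := by
  classical
  have hp0 : p ≠ 0 := (Fact.out : p.Prime).ne_zero
  constructor
  · rintro ⟨E, N, hEp, hN, rfl⟩
    rw [Matrix.trace_add]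
    have htN : N.trace = 0 := (Matrix.isNilpotent_trace_of_isNilpotent hN).eq_zero
    rw [htN, add_zero]
    apply my_eq_intCast_of_pow p
    have := my_trace_pow_char p E
    rw [hEp] at this
    exact this.symm
  · rintro ⟨m, hm⟩
    rcases Nat.eq_zero_or_pos n with hn | hn
    · refine ⟨0, 0, ?_, ⟨1, by simp⟩, ?_⟩
      · rw [zero_pow hp0]
      · subst hn
        ext i j
        exact i.elim0
    -- now n ≥ 1
    subst hC
    set t : F := (companionMatrix c).trace with hts
    have htp : t ^ p = t := by
      set φ : ZMod p →+* F := ZMod.castHom (dvd_refl p) F with hφ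
      have h1 : t = φ ((m : ZMod p)) := by rw [map_intCast, hm]
      rw [h1, ← map_pow, ZMod.pow_card]
    set last : Fin n := ⟨n - 1, by omega⟩ with hlast
    have hlastval : (last : ℕ) = n - 1 := rfl
    have htrace : t = -c last := my_companion_trace hn c
    set v : Fin n → F := fun i => -c i with hv
    set e : Fin n → F := fun j => if j = last then (1 : F) else 0 with he
    have hedotv : e ⬝ᵥ v = t := by rw [he, my_ite_dot, one_mul, hv, htrace]
    have hedote : e ⬝ᵥ e = 1 := by
      rw [he, my_ite_dot, one_mul]; simp
    by_cases ht0 : t = 0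
    · -- trace zero case
      have hclast : c last = 0 := by
        have h0 := htrace
        rw [ht0] at h0
        exact neg_eq_zero.mp h0.symm
      by_cases hc : ∀ i, c i = 0
      · -- companion matrix is nilpotent
        refine ⟨0, companionMatrix c, by rw [zero_pow hp0], ?_, by rw [zero_add]⟩
        apply my_nilpotent_of_lower
        intro i j hij
        by_cases hj : (j : ℕ) = n - 1
        · simp [companionMatrix, hj, hc i]
        · have hij' : (i : ℕ) ≠ (j : ℕ) + 1 := by omega
          simp [companionMatrix, hj, hij']
      · push_neg at hc
        obtain ⟨i₀, hi₀⟩ := hc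
        have hi₀last : i₀ ≠ last := by
          intro hh; rw [hh] at hi₀; exact hi₀ hclast
        set u : Fin n → F := fun j => if j = i₀ then (-c i₀)⁻¹ else 0 with hu
        have hudotv : u ⬝ᵥ v = 1 := by
          rw [hu, my_ite_dot]
          simp only [hv]
          rw [mul_comm, mul_inv_cancel₀ (neg_ne_zero.mpr hi₀)]
        have hudote : u ⬝ᵥ e = 0 := by
          rw [he, my_dot_ite, mul_one, hu]
          simp [hi₀last.symm]
        set E : Matrix (Fin n) (Fin n) F := vecMulVec v e + vecMulVec e u with hE
        have hE2 : E * E = vecMulVec v u + vecMulVec e e := by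
          rw [hE, add_mul, mul_add, mul_add, my_vecMulVec_mul, my_vecMulVec_mul,
            my_vecMulVec_mul, my_vecMulVec_mul, hedotv, ht0, hedote, hudotv, hudote]
          simp
        have hE3 : E ^ 3 = E := by
          rw [pow_succ, pow_two, hE2]
          nth_rewrite 1 [hE]
          rw [add_mul, mul_add, mul_add, my_vecMulVec_mul, my_vecMulVec_mul,
            my_vecMulVec_mul, my_vecMulVec_mul, hedotv, ht0, hedote, hudotv, hudote]
          simp [hE]
        obtain ⟨k, hk⟩ := hp
        refine ⟨E, companionMatrix c - E, ?_, ?_, by abel⟩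
        · have hk' : p = 2 * k + 1 := by omega
          rw [hk']
          exact my_pow_odd E hE3 k
        · apply my_nilpotent_of_lower
          intro i j hij
          simp only [Matrix.sub_apply, hE, Matrix.add_apply, Matrix.vecMulVec_apply]
          by_cases hj : j = last
          · subst hj
            have hjval : ((last : Fin n) : ℕ) = n - 1 := rfl
            have hulast : u last = 0 := by simp [hu, hi₀last.symm]
            simp [companionMatrix, hjval, he, hv, hulast]
          · have hjval : (j : ℕ) ≠ n - 1 := fun hh => hj (Fin.ext hh)
            have hij' : (i : ℕ) ≠ (j : ℕ) + 1 := by omega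
            have hilast : i ≠ last := by
              intro hh
              apply hjval
              have : (i : ℕ) = n - 1 := by rw [hh]
              omega
            simp [companionMatrix, hjval, hij', he, hj, hilast]
    · -- trace nonzero case
      set E : Matrix (Fin n) (Fin n) F := vecMulVec v e with hE
      have hE2 : E * E = t • E := by
        rw [hE, my_vecMulVec_mul, hedotv]
      have hpow : ∀ k : ℕ, E ^ (k + 1) = t ^ k • E := by
        intro k
        induction k with
        | zero => simp
        | succ k ih =>
          rw [pow_succ, ih, smul_mul_assoc, hE2, smul_smul, ← pow_succ]
      have htp1 : t ^ (p - 1) = 1 := by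
        have h1 : t ^ (p - 1) * t = t := by
          have hpp : p - 1 + 1 = p := by omega
          rw [← pow_succ, hpp, htp]
        have := mul_right_cancel₀ ht0 (h1.trans (one_mul t).symm)
        exact this
      refine ⟨E, companionMatrix c - E, ?_, ?_, by abel⟩
      · have : p = (p - 1) + 1 := by omega
        rw [this, hpow, htp1, one_smul]
      · apply my_nilpotent_of_lower
        intro i j hij
        simp only [Matrix.sub_apply, hE, Matrix.vecMulVec_apply]
        by_cases hj : j = last
        · subst hj
          have hjval : ((last : Fin n) : ℕ) = n - 1 := rfl
          simp [companionMatrix, hjval, he, hv]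
        · have hjval : (j : ℕ) ≠ n - 1 := fun hh => hj (Fin.ext hh)
          have hij' : (i : ℕ) ≠ (j : ℕ) + 1 := by omega
          simp [companionMatrix, hjval, hij', he, hj]
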